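/- arXiv:2412.17679 — 2 statements merged into one kernel-verified Lean document; each statement's English description precedes it below -/
import Mathlib

section
/- The monomial subalgebra A = K[q^{a²}x^a : a ∈ ℕ] of the polynomial ring K[q,x] over a field K is not Noetherian; in particular, A is not finitely generated as a K-algebra. -/
set_option synthInstance.maxHeartbeats 1000000
set_option maxHeartbeats 1000000

open MvPolynomial

/-- The monomial subalgebra `K[q^{a²} x^a : a ∈ ℕ]` of `K[q,x]`,
where `q = X 0` and `x = X 1`. -/
noncomputable def weightedSubalgebra (K : Type*) [Field K] :
    Subalgebra K (MvPolynomial (Fin 2) K) :=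
  Algebra.adjoin K { p | ∃ a : ℕ, p = X 0 ^ (a ^ 2) * X 1 ^ a }

/-- Subalgebra of polynomials whose monomials `q^m x^n` satisfy `m ≤ w n`,
for superadditive `w`. -/
noncomputable def boundAlg (K : Type*) [Field K] (w : ℕ → ℕ)
    (hw : ∀ x y, w x + w y ≤ w (x + y)) : Subalgebra K (MvPolynomial (Fin 2) K) where
  carrier := {p | ∀ d ∈ p.support, d 0 ≤ w (d 1)}
  mul_mem' := by
    intro p q hp hq d hd
    obtain ⟨a, ha, b, hb, rfl⟩ := Finset.mem_add.1 (MvPolynomial.support_mul p q hd)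
    calc (a + b) 0 = a 0 + b 0 := rfl
      _ ≤ w (a 1) + w (b 1) := Nat.add_le_add (hp a ha) (hq b hb)
      _ ≤ w (a 1 + b 1) := hw _ _
      _ = w ((a + b) 1) := rfl
  add_mem' := by
    intro p q hp hq d hd
    rcases Finset.mem_union.1 (MvPolynomial.support_add hd) with h | h
    · exact hp d h
    · exact hq d h
  one_mem' := by
    classical
    intro d hd
    rw [← MvPolynomial.C_1, MvPolynomial.C_apply, MvPolynomial.support_monomial] at hd
    split at hd
    · simp at hd
    · simp only [Finset.mem_singleton] at hd; subst hd; simp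
  algebraMap_mem' := by
    classical
    intro r d hd
    rw [MvPolynomial.algebraMap_eq, MvPolynomial.C_apply, MvPolynomial.support_monomial] at hd
    split at hd
    · simp at hd
    · simp only [Finset.mem_singleton] at hd; subst hd; simp

lemma sq_superadd : ∀ x y : ℕ, x ^ 2 + y ^ 2 ≤ (x + y) ^ 2 := by
  intro x y
  have h : (x + y) ^ 2 = x ^ 2 + 2 * x * y + y ^ 2 := by ring
  omega

lemma gen_support (K : Type*) [Field K] (m a : ℕ) :
    (X 0 ^ m * X 1 ^ a : MvPolynomial (Fin 2) K).support
      = {Finsupp.single 0 m + Finsupp.single 1 a} := by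
  classical
  rw [X_pow_eq_monomial, X_pow_eq_monomial, monomial_mul, support_monomial]
  simp

lemma exp_apply_0 (m a : ℕ) :
    ((Finsupp.single (0 : Fin 2) m + Finsupp.single (1 : Fin 2) a : Fin 2 →₀ ℕ)) 0 = m := by
  simp [Finsupp.single_apply]

lemma exp_apply_1 (m a : ℕ) :
    ((Finsupp.single (0 : Fin 2) m + Finsupp.single (1 : Fin 2) a : Fin 2 →₀ ℕ)) 1 = a := by
  simp [Finsupp.single_apply]

lemma weighted_le_quad (K : Type*) [Field K] :
    weightedSubalgebra K ≤ boundAlg K (· ^ 2) sq_superadd := by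
  apply Algebra.adjoin_le
  rintro p ⟨a, rfl⟩ d hd
  rw [gen_support, Finset.mem_singleton] at hd
  subst hd
  rw [exp_apply_0, exp_apply_1]

lemma gen_mem (K : Type*) [Field K] (a : ℕ) :
    (X 0 ^ (a ^ 2) * X 1 ^ a : MvPolynomial (Fin 2) K) ∈ weightedSubalgebra K :=
  Algebra.subset_adjoin ⟨a, rfl⟩

lemma lin_superadd (M : ℕ) : ∀ x y : ℕ, M * x + M * y ≤ M * (x + y) := by
  intro x y; rw [Nat.mul_add]

lemma not_fg (K : Type*) [Field K] : ¬ (weightedSubalgebra K).FG := by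
  rintro ⟨s, hs⟩
  set M : ℕ := s.sup (fun p => p.totalDegree) with hM
  -- every generator lies in the linear-bound algebra
  have hsub : Algebra.adjoin K (↑s : Set (MvPolynomial (Fin 2) K))
      ≤ boundAlg K (M * ·) (lin_superadd M) := by
    apply Algebra.adjoin_le
    intro p hp d hd
    have hpA : p ∈ weightedSubalgebra K := hs ▸ Algebra.subset_adjoin hp
    have h1 : d 0 ≤ (d 1) ^ 2 := weighted_le_quad K hpA d hd
    have h2 : d 1 ≤ M := by
      calc d 1 ≤ p.degreeOf 1 := MvPolynomial.monomial_le_degreeOf 1 hd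
        _ ≤ p.totalDegree := MvPolynomial.degreeOf_le_totalDegree p 1
        _ ≤ M := Finset.le_sup hp
    calc d 0 ≤ d 1 * d 1 := by rw [← pow_two]; exact h1
      _ ≤ M * d 1 := Nat.mul_le_mul_right _ h2
  rw [hs] at hsub
  -- but the generator with a = M + 1 violates the linear bound
  have hmem := hsub (gen_mem K (M + 1))
  have := hmem (Finsupp.single 0 ((M + 1) ^ 2) + Finsupp.single 1 (M + 1))
    (by rw [gen_support]; exact Finset.mem_singleton_self _)
  rw [exp_apply_0, exp_apply_1] at this
  nlinarith [this]

/-- In the subalgebra, the ideal-like condition: all monomials have positive `x`-degree. -/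
noncomputable def posIdeal (K : Type*) [Field K] : Ideal (weightedSubalgebra K) where
  carrier := {x | ∀ d ∈ (x : MvPolynomial (Fin 2) K).support, 1 ≤ d 1}
  add_mem' := by
    intro p q hp hq d hd
    have hd' : d ∈ ((p : MvPolynomial (Fin 2) K) + (q : MvPolynomial (Fin 2) K)).support := hd
    rcases Finset.mem_union.1 (MvPolynomial.support_add hd') with h | h
    · exact hp d h
    · exact hq d h
  zero_mem' := by
    intro d hd
    simp at hd
  smul_mem' := by
    intro c x hx d hd
    rw [smul_eq_mul, Subalgebra.coe_mul] at hd
    obtain ⟨a, _, b, hb, rfl⟩ := Finset.mem_add.1 (MvPolynomial.support_mul _ _ hd)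
    have : 1 ≤ b 1 := hx b hb
    calc 1 ≤ b 1 := this
      _ ≤ a 1 + b 1 := Nat.le_add_left _ _
      _ = (a + b) 1 := rfl

lemma mem_posIdeal_iff (K : Type*) [Field K] (x : weightedSubalgebra K) :
    x ∈ posIdeal K ↔ ∀ d ∈ (x : MvPolynomial (Fin 2) K).support, 1 ≤ d 1 :=
  Iff.rfl

lemma not_noetherian (K : Type*) [Field K] : ¬ IsNoetherianRing (weightedSubalgebra K) := by
  intro h
  set I : Ideal (weightedSubalgebra K) := Ideal.span
    {x : weightedSubalgebra K | ∃ a : ℕ, 1 ≤ a ∧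
      (x : MvPolynomial (Fin 2) K) = X 0 ^ (a ^ 2) * X 1 ^ a} with hI
  obtain ⟨s, hs⟩ := (isNoetherianRing_iff_ideal_fg _).1 h I
  have hIpos : I ≤ posIdeal K := by
    rw [hI]
    apply Ideal.span_le.2
    rintro x ⟨a, ha, hx⟩
    rw [SetLike.mem_coe, mem_posIdeal_iff]
    intro d hd
    rw [hx, gen_support, Finset.mem_singleton] at hd
    subst hd
    rw [exp_apply_1]
    exact ha
  set M : ℕ := s.sup (fun p => (p : MvPolynomial (Fin 2) K).totalDegree) with hM
  set a : ℕ := M + 1 with ha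
  have hga : (⟨X 0 ^ (a ^ 2) * X 1 ^ a, gen_mem K a⟩ : weightedSubalgebra K) ∈ I :=
    Ideal.subset_span ⟨a, Nat.le_add_left _ _, rfl⟩
  rw [← hs] at hga
  obtain ⟨f, -, hf⟩ := Submodule.mem_span_finset.1 hga
  have hval : (∑ i ∈ s, ((f i : MvPolynomial (Fin 2) K) * (i : MvPolynomial (Fin 2) K)))
      = X 0 ^ (a ^ 2) * X 1 ^ a := by
    have := congrArg (Subtype.val) hf
    simpa using this
  have hmem : (Finsupp.single (0 : Fin 2) (a ^ 2) + Finsupp.single (1 : Fin 2) a : Fin 2 →₀ ℕ)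
      ∈ (∑ i ∈ s, ((f i : MvPolynomial (Fin 2) K) * (i : MvPolynomial (Fin 2) K))).support := by
    rw [hval, gen_support]
    exact Finset.mem_singleton_self _
  classical
  obtain ⟨i, hi, hmi⟩ := Finset.mem_biUnion.1 (MvPolynomial.support_sum hmem)
  obtain ⟨d, hd, e, he, hde⟩ := Finset.mem_add.1 (MvPolynomial.support_mul _ _ hmi)
  -- facts about d and e
  have hd0 : d 0 ≤ (d 1) ^ 2 := weighted_le_quad K (f i).2 d hd
  have he0 : e 0 ≤ (e 1) ^ 2 := weighted_le_quad K i.2 e he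
  have he1 : 1 ≤ e 1 :=
    (mem_posIdeal_iff K i).1 (hIpos (hs ▸ Ideal.subset_span hi)) e he
  have heM : e 1 ≤ M := by
    calc e 1 ≤ (i : MvPolynomial (Fin 2) K).degreeOf 1 :=
        MvPolynomial.monomial_le_degreeOf 1 he
      _ ≤ (i : MvPolynomial (Fin 2) K).totalDegree :=
        MvPolynomial.degreeOf_le_totalDegree _ 1
      _ ≤ M := Finset.le_sup (f := fun p : weightedSubalgebra K =>
          (p : MvPolynomial (Fin 2) K).totalDegree) hi
  have h0 : d 0 + e 0 = a ^ 2 := by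
    have := DFunLike.congr_fun hde 0
    simpa [Finsupp.add_apply, exp_apply_0] using this
  have h1 : d 1 + e 1 = a := by
    have := DFunLike.congr_fun hde 1
    simpa [Finsupp.add_apply, exp_apply_1] using this
  have hd1 : 1 ≤ d 1 := by omega
  have hsq : (d 1 + e 1) ^ 2 = d 1 ^ 2 + 2 * (d 1 * e 1) + e 1 ^ 2 := by ring
  have hprod : 1 ≤ d 1 * e 1 := Nat.one_le_iff_ne_zero.2 (by positivity)
  rw [← h1] at h0
  omega

theorem stmt_4 (K : Type*) [Field K] :
    ¬ IsNoetherianRing (weightedSubalgebra K) ∧ ¬ (weightedSubalgebra K).FG :=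
  ⟨not_noetherian K, not_fg K⟩
end

section
/- For every integer k ≥ 2, the monomial q^{k²}x^k lies in the ideal of A generated by {q^{i²}x^i : 1 ≤ i ≤ k} but not in the ideal generated by {q^{i²}x^i : 1 ≤ i ≤ k−1}. Consequently the chain of ideals I_k = (q^{i²}x^i : 1 ≤ i ≤ k) of A is strictly increasing. -/
open MvPolynomial

/-- The element `q^{a²} x^a` of the monomial subalgebra. -/
noncomputable def genElem (K : Type*) [Field K] (a : ℕ) : weightedSubalgebra K :=
  ⟨X 0 ^ (a ^ 2) * X 1 ^ a, Algebra.subset_adjoin ⟨a, rfl⟩⟩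

/-- The ideal `I_k = (q^{i²} x^i : 1 ≤ i ≤ k)` of the monomial subalgebra. -/
noncomputable def idealI (K : Type*) [Field K] (k : ℕ) : Ideal (weightedSubalgebra K) :=
  Ideal.span ((fun i => genElem K i) '' { i | 1 ≤ i ∧ i ≤ k })

lemma gen_eq_monomial (K : Type*) [Field K] (a : ℕ) :
    (X 0 ^ (a ^ 2) * X 1 ^ a : MvPolynomial (Fin 2) K) =
      monomial (Finsupp.single 0 (a ^ 2) + Finsupp.single 1 a) 1 := by
  rw [X_pow_eq_monomial, X_pow_eq_monomial, monomial_mul, one_mul]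

/-- Every monomial of an element of the subalgebra has exponents (m, n) with m ≤ n²,
and n = 0 implies m = 0. -/
lemma coeff_mem_weighted (K : Type*) [Field K] {p : MvPolynomial (Fin 2) K}
    (hp : p ∈ weightedSubalgebra K) :
    ∀ d : Fin 2 →₀ ℕ, coeff d p ≠ 0 → d 0 ≤ (d 1) ^ 2 ∧ (d 1 = 0 → d 0 = 0) := by
  induction hp using Algebra.adjoin_induction with
  | mem x hx =>
    obtain ⟨a, rfl⟩ := hx
    intro d hd
    rw [gen_eq_monomial, coeff_monomial] at hd
    split_ifs at hd with h
    · subst h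
      constructor
      · simp
      · intro h1
        simp at h1 ⊢
        simp [h1]
    · exact absurd rfl hd
  | algebraMap r =>
    intro d hd
    rw [algebraMap_eq, coeff_C] at hd
    split_ifs at hd with h
    · subst h; simp
    · exact absurd rfl hd
  | add x y hx hy ihx ihy =>
    intro d hd
    rw [coeff_add] at hd
    rcases (by by_contra hc; push_neg at hc; simp [hc.1, hc.2] at hd :
        coeff d x ≠ 0 ∨ coeff d y ≠ 0) with h | h
    · exact ihx d h
    · exact ihy d h
  | mul x y hx hy ihx ihy =>
    intro d hd
    rw [coeff_mul] at hd
    obtain ⟨⟨u, v⟩, huv, hne⟩ := Finset.exists_ne_zero_of_sum_ne_zero hd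
    rw [Finset.HasAntidiagonal.mem_antidiagonal] at huv
    obtain ⟨h1, h2⟩ := ihx u (left_ne_zero_of_mul hne)
    obtain ⟨h3, h4⟩ := ihy v (right_ne_zero_of_mul hne)
    subst huv
    constructor
    · have : (u + v) 0 = u 0 + v 0 := rfl
      have h5 : (u + v) 1 = u 1 + v 1 := rfl
      rw [this, h5]
      nlinarith
    · intro h0
      have h5 : u 1 + v 1 = 0 := h0
      have hu1 : u 1 = 0 := by omega
      have hv1 : v 1 = 0 := by omega
      have : (u + v) 0 = u 0 + v 0 := rfl
      rw [this, h2 hu1, h4 hv1]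

/-- The key invariant of elements of `idealI K m`. -/
lemma ideal_invariant (K : Type*) [Field K] (m : ℕ) {x : weightedSubalgebra K}
    (hx : x ∈ idealI K m) :
    ∀ d : Fin 2 →₀ ℕ, coeff d (x : MvPolynomial (Fin 2) K) ≠ 0 →
      1 ≤ d 1 ∧ d 0 ≤ (d 1) ^ 2 ∧ (m < d 1 → d 0 < (d 1) ^ 2) := by
  induction hx using Submodule.span_induction with
  | mem g hg =>
    obtain ⟨i, ⟨hi1, hi2⟩, rfl⟩ := hg
    intro d hd
    rw [show ((genElem K i : weightedSubalgebra K) : MvPolynomial (Fin 2) K)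
        = X 0 ^ (i ^ 2) * X 1 ^ i from rfl, gen_eq_monomial, coeff_monomial] at hd
    split_ifs at hd with h
    · subst h
      refine ⟨by simpa using hi1, by simp, ?_⟩
      intro hlt
      simp at hlt
      omega
    · exact absurd rfl hd
  | zero => intro d hd; simp at hd
  | add x y hx hy ihx ihy =>
    intro d hd
    have : coeff d ((x : MvPolynomial (Fin 2) K) + (y : MvPolynomial (Fin 2) K)) ≠ 0 := hd
    rw [coeff_add] at this
    rcases (by by_contra hc; push_neg at hc; simp [hc.1, hc.2] at this :
        coeff d (x : MvPolynomial (Fin 2) K) ≠ 0 ∨ coeff d (y : MvPolynomial (Fin 2) K) ≠ 0)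
      with h | h
    · exact ihx d h
    · exact ihy d h
  | smul r x hx ih =>
    intro d hd
    have hd' : coeff d ((r : MvPolynomial (Fin 2) K) * (x : MvPolynomial (Fin 2) K)) ≠ 0 := hd
    rw [coeff_mul] at hd'
    obtain ⟨⟨u, v⟩, huv, hne⟩ := Finset.exists_ne_zero_of_sum_ne_zero hd'
    rw [Finset.HasAntidiagonal.mem_antidiagonal] at huv
    obtain ⟨h1, h2⟩ := coeff_mem_weighted K r.2 u (left_ne_zero_of_mul hne)
    obtain ⟨h3, h4, h5⟩ := ih v (right_ne_zero_of_mul hne)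
    subst huv
    have e0 : (u + v) 0 = u 0 + v 0 := rfl
    have e1 : (u + v) 1 = u 1 + v 1 := rfl
    rw [e0, e1]
    refine ⟨by omega, by nlinarith, ?_⟩
    intro hlt
    rcases Nat.eq_zero_or_pos (u 1) with h | h
    · rw [h, h2 h, zero_add, zero_add]
      exact h5 (by omega)
    · nlinarith

theorem stmt_5 (K : Type*) [Field K] (k : ℕ) (hk : 2 ≤ k) :
    genElem K k ∈ idealI K k ∧ genElem K k ∉ idealI K (k - 1) ∧
    idealI K (k - 1) < idealI K k := by
  have h1 : genElem K k ∈ idealI K k :=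
    Ideal.subset_span ⟨k, ⟨by omega, le_rfl⟩, rfl⟩
  have h2 : genElem K k ∉ idealI K (k - 1) := by
    intro hmem
    have := ideal_invariant K (k - 1) hmem
      (Finsupp.single 0 (k ^ 2) + Finsupp.single 1 k) (by
        rw [show ((genElem K k : weightedSubalgebra K) : MvPolynomial (Fin 2) K)
            = X 0 ^ (k ^ 2) * X 1 ^ k from rfl, gen_eq_monomial, coeff_monomial, if_pos rfl]
        exact one_ne_zero)
    simp only [Finsupp.add_apply, Finsupp.single_apply] at this
    norm_num at this
    omega
  refine ⟨h1, h2, lt_of_le_of_ne ?_ ?_⟩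
  · exact Ideal.span_mono (Set.image_mono (fun i hi => ⟨hi.1, hi.2.trans (Nat.sub_le k 1)⟩))
  · intro heq
    exact h2 (heq ▸ h1)
end
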